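/- In the ring A = Z_3[[a_1, b_1, a_2, b_2]]/(a_1 b_1 - 3, a_2 b_2 - 3), the ideal P generated by the images of a_1 and a_2 is not a principal ideal. -/

import Mathlib

/-! The ring `A = ℤ₃[[a₁, b₁, a₂, b₂]] / (a₁b₁ - 3, a₂b₂ - 3)`, where `ℤ₃ = ℤ_[3]` is the
ring of 3-adic integers: the completed local ring of the family of compactified jacobians
at the point `[I]`, `I = ν⁎𝒪(-2)`, in Kass's example. -/

/-- The formal power series ring `ℤ₃[[a₁, b₁, a₂, b₂]]` in four variables over the
3-adic integers. -/
abbrev B : Type := MvPowerSeries (Fin 4) ℤ_[3]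

/-- The ideal `(a₁b₁ - 3, a₂b₂ - 3)` of `ℤ₃[[a₁, b₁, a₂, b₂]]`, where `a₁, b₁, a₂, b₂`
are the four variables. -/
noncomputable abbrev relIdeal : Ideal B :=
  Ideal.span {MvPowerSeries.X 0 * MvPowerSeries.X 1 - 3,
    MvPowerSeries.X 2 * MvPowerSeries.X 3 - 3}

/-- The ring `A = ℤ₃[[a₁, b₁, a₂, b₂]] / (a₁b₁ - 3, a₂b₂ - 3)`. -/
abbrev A : Type := B ⧸ relIdeal

/-- The image `a₁` in `A` of the first variable. -/
noncomputable def a1 : A := Ideal.Quotient.mk relIdeal (MvPowerSeries.X 0)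

/-- The image `b₁` in `A` of the second variable. -/
noncomputable def b1 : A := Ideal.Quotient.mk relIdeal (MvPowerSeries.X 1)

/-- The image `a₂` in `A` of the third variable. -/
noncomputable def a2 : A := Ideal.Quotient.mk relIdeal (MvPowerSeries.X 2)

/-- The image `b₂` in `A` of the fourth variable. -/
noncomputable def b2 : A := Ideal.Quotient.mk relIdeal (MvPowerSeries.X 3)

open MvPowerSeries Finsupp

noncomputable def ψ : ℤ_[3] →+* ZMod 3 := PadicInt.toZMod

lemma psi_three : ψ (3 : ℤ_[3]) = 0 := by
  have : ((3 : ℕ) : ℤ_[3]) = (3 : ℤ_[3]) := by norm_num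
  rw [← this, map_natCast]
  decide

lemma coeff_mul_XX (i j : Fin 4) (e : Fin 4 →₀ ℕ)
    (h : ¬ (single i 1 + single j 1 ≤ e)) (f : B) :
    coeff e (f * (X i * X j)) = 0 := by
  have hXX : (X i * X j : B) = monomial (single i 1 + single j 1) 1 := by
    rw [X, X, monomial_mul_monomial, one_mul]
  rw [hXX, coeff_mul_monomial, if_neg h]

lemma psi_coeff_rel_term (i j : Fin 4) (e : Fin 4 →₀ ℕ)
    (h : ¬ (single i 1 + single j 1 ≤ e)) (f : B) :
    ψ (coeff e (f * (X i * X j - 3))) = 0 := by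
  rw [mul_sub, map_sub, coeff_mul_XX i j e h, zero_sub, map_neg,
    show ((3 : B) = C 3) from (map_ofNat _ 3).symm, coeff_mul_C,
    map_mul, psi_three, mul_zero, neg_zero]

lemma psi_coeff_rel (e : Fin 4 →₀ ℕ)
    (h0 : ¬ (single (0 : Fin 4) 1 + single 1 1 ≤ e))
    (h2 : ¬ (single (2 : Fin 4) 1 + single 3 1 ≤ e))
    {f : B} (hf : f ∈ relIdeal) : ψ (coeff e f) = 0 := by
  rw [Ideal.mem_span_pair] at hf
  obtain ⟨g1, g2, rfl⟩ := hf
  rw [map_add, map_add, psi_coeff_rel_term 0 1 e h0, psi_coeff_rel_term 2 3 e h2, add_zero]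

lemma coeff_single_mul (k : Fin 4) (f g : B) :
    coeff (single k 1) (f * g) =
      constantCoeff f * coeff (single k 1) g +
      coeff (single k 1) f * constantCoeff g := by
  rw [coeff_mul, antidiagonal_single]
  rw [show Finset.HasAntidiagonal.antidiagonal (1 : ℕ) = {(0, 1), (1, 0)} from by decide]
  simp [coeff_zero_eq_constantCoeff]

lemma nle (e : Fin 4 →₀ ℕ) (k : Fin 4) (hk : e k = 0) (i j : Fin 4) (h : k = i ∨ k = j) :
    ¬ (single i 1 + single j 1 ≤ e) := by
  intro hle
  rw [Finsupp.le_def] at hle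
  have := hle k
  rcases h with rfl | rfl <;> simp [Finsupp.single_apply, hk] at this

/-- In `A`, the ideal `P = (a₁, a₂)` generated by the images of `a₁` and `a₂` is not a
principal ideal. -/
theorem span_a1_a2_not_principal : ¬ (Ideal.span {a1, a2} : Ideal A).IsPrincipal := by
  rintro ⟨g, hg⟩
  obtain ⟨G, rfl⟩ := Ideal.Quotient.mk_surjective g
  have ha1 : a1 ∈ Ideal.span {a1, a2} := Ideal.subset_span (Set.mem_insert _ _)
  have ha2 : a2 ∈ Ideal.span {a1, a2} := Ideal.subset_span (Set.mem_insert_of_mem _ rfl)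
  have hgm : Ideal.Quotient.mk relIdeal G ∈ Ideal.span {a1, a2} := by
    rw [hg]; exact Ideal.mem_span_singleton_self _
  rw [hg, Submodule.mem_span_singleton] at ha1 ha2
  obtain ⟨r, hr⟩ := ha1
  obtain ⟨s, hs⟩ := ha2
  rw [smul_eq_mul] at hr hs
  obtain ⟨R, rfl⟩ := Ideal.Quotient.mk_surjective r
  obtain ⟨S, rfl⟩ := Ideal.Quotient.mk_surjective s
  rw [Ideal.mem_span_pair] at hgm
  obtain ⟨p, q, hpq⟩ := hgm
  obtain ⟨P, rfl⟩ := Ideal.Quotient.mk_surjective p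
  obtain ⟨Q, rfl⟩ := Ideal.Quotient.mk_surjective q
  have h1 : (X 0 : B) - R * G ∈ relIdeal := by
    apply Ideal.Quotient.eq.mp; rw [map_mul]; exact hr.symm
  have h2 : (X 2 : B) - S * G ∈ relIdeal := by
    apply Ideal.Quotient.eq.mp; rw [map_mul]; exact hs.symm
  have h3 : (P * X 0 + Q * X 2 : B) - G ∈ relIdeal := by
    apply Ideal.Quotient.eq.mp; rw [map_add, map_mul, map_mul]; exact hpq
  -- non-domination facts
  have nz1 := nle 0 1 rfl 0 1 (Or.inr rfl)
  have nz2 := nle 0 3 rfl 2 3 (Or.inr rfl)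
  have na1 := nle (single 0 1) 1 (by simp) 0 1 (Or.inr rfl)
  have na2 := nle (single 0 1) 3 (by simp) 2 3 (Or.inr rfl)
  have nb1 := nle (single 2 1) 1 (by simp) 0 1 (Or.inr rfl)
  have nb2 := nle (single 2 1) 3 (by simp) 2 3 (Or.inr rfl)
  -- constant coefficient of G is 0
  have hcG : ψ (constantCoeff G) = 0 := by
    have := psi_coeff_rel 0 nz1 nz2 h3
    simp only [map_sub, map_add, coeff_zero_eq_constantCoeff_apply, map_mul,
      constantCoeff_X, mul_zero, add_zero, zero_add, zero_sub, map_neg, neg_eq_zero] at this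
    exact this
  have eq1 : ψ (constantCoeff R) * ψ (coeff (single 0 1) G) = 1 := by
    have := psi_coeff_rel (single 0 1) na1 na2 h1
    rw [map_sub, coeff_single_mul, map_sub, map_add, map_mul, map_mul, hcG, mul_zero, add_zero] at this
    simp [coeff_X] at this
    linear_combination -this
  have eq2 : ψ (constantCoeff R) * ψ (coeff (single 2 1) G) = 0 := by
    have := psi_coeff_rel (single 2 1) nb1 nb2 h1
    rw [map_sub, coeff_single_mul, map_sub, map_add, map_mul, map_mul, hcG, mul_zero, add_zero] at this
    simp [coeff_X, Finsupp.single_eq_single_iff] at this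
    rcases this with h | h <;> simp [h]
  have eq3 : ψ (constantCoeff S) * ψ (coeff (single 2 1) G) = 1 := by
    have := psi_coeff_rel (single 2 1) nb1 nb2 h2
    rw [map_sub, coeff_single_mul, map_sub, map_add, map_mul, map_mul, hcG, mul_zero, add_zero] at this
    simp [coeff_X] at this
    linear_combination -this
  have hR : ψ (constantCoeff R) ≠ 0 := by
    intro h; rw [h, zero_mul] at eq1; exact zero_ne_one eq1
  have hG2 : ψ (coeff (single 2 1) G) = 0 := by
    rcases mul_eq_zero.mp eq2 with h | h
    · exact absurd h hR
    · exact h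
  rw [hG2, mul_zero] at eq3
  exact zero_ne_one eq3
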